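/- Assume in addition that f(x) → +∞ as x → +∞. Let 0 < c₁ ≤ c₂ and let (S_k, I_k, c_k), k ∈ ℕ, be a sequence of traveling wave profiles with speeds c_k ∈ [c₁, c₂] such that 0 < S_k(ξ) < S₀ and I_k(ξ) > 0 for all ξ ∈ ℝ and all k. If (ξ_k) is a sequence of reals with I_k(ξ_k) → +∞ as k → +∞, then S_k(ξ_k) → 0 as k → +∞. -/

import Mathlib

open Real Filter

set_option maxHeartbeats 2000000 in
/-- **Vanishing of the susceptible component where the infected one blows up**
(Lemma 3.3 / Appendix B).  Assume additionally `f(x) → +∞` as `x → +∞`.  If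
`(S_k, I_k, c_k)` is a sequence of traveling wave profiles with speeds
`c_k ∈ [c₁, c₂] ⊂ (0, ∞)` with `0 < S_k < S₀`, `I_k > 0`, and `(ξ_k)` is a sequence
of reals with `I_k(ξ_k) → +∞`, then `S_k(ξ_k) → 0`. -/
theorem S_vanishes_where_I_blows_up
    (d₁ d₂ Λ β μ₁ μ₂ : ℝ) (hd₁ : 0 < d₁) (hd₂ : 0 < d₂) (hΛ : 0 < Λ)
    (hβ : 0 < β) (hμ₁ : 0 < μ₁) (hμ₂ : 0 < μ₂)
    (f : ℝ → ℝ) (hf0 : f 0 = 0) (hfC1 : ContDiff ℝ 1 f)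
    (hf' : ∀ I : ℝ, 0 ≤ I → 0 < deriv f I)
    (hfratio : ∀ I J : ℝ, 0 < I → I ≤ J → f J / J ≤ f I / I)
    (hfinf : Tendsto f atTop atTop)
    (c₁ c₂ : ℝ) (hc₁ : 0 < c₁) (hc₁₂ : c₁ ≤ c₂)
    (S I : ℕ → ℝ → ℝ) (c : ℕ → ℝ)
    (hck : ∀ k : ℕ, c k ∈ Set.Icc c₁ c₂)
    (hSk : ∀ k : ℕ, ContDiff ℝ 1 (S k)) (hIk : ∀ k : ℕ, ContDiff ℝ 1 (I k))
    (hSeq : ∀ k : ℕ, ∀ ξ : ℝ, c k * deriv (S k) ξ =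
      d₁ * (S k (ξ + 1) + S k (ξ - 1) - 2 * S k ξ) + Λ - μ₁ * S k ξ
        - β * S k ξ * f (I k ξ))
    (hIeq : ∀ k : ℕ, ∀ ξ : ℝ, c k * deriv (I k) ξ =
      d₂ * (I k (ξ + 1) + I k (ξ - 1) - 2 * I k ξ) + β * S k ξ * f (I k ξ)
        - μ₂ * I k ξ)
    (hSbd : ∀ k : ℕ, ∀ ξ : ℝ, 0 < S k ξ ∧ S k ξ < Λ / μ₁)
    (hIpos : ∀ k : ℕ, ∀ ξ : ℝ, 0 < I k ξ)
    (ξ : ℕ → ℝ) (hblow : Tendsto (fun k => I k (ξ k)) atTop atTop) :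
    Tendsto (fun k => S k (ξ k)) atTop (nhds 0) := by
  have hc₂ : 0 < c₂ := lt_of_lt_of_le hc₁ hc₁₂
  set S₀ : ℝ := Λ / μ₁ with hS₀def
  have hS₀ : 0 < S₀ := div_pos hΛ hμ₁
  clear_value S₀
  -- facts about f
  have hfstrict : StrictMonoOn f (Set.Ici 0) := by
    apply strictMonoOn_of_deriv_pos (convex_Ici 0) hfC1.continuous.continuousOn
    intro x hx
    rw [interior_Ici] at hx
    exact hf' x hx.le
  have hfmono : MonotoneOn f (Set.Ici 0) := hfstrict.monotoneOn
  have hfpos : ∀ x : ℝ, 0 < x → 0 < f x := by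
    intro x hx
    have := hfstrict Set.self_mem_Ici (Set.mem_Ici.mpr hx.le) hx
    rwa [hf0] at this
  have hfnn : ∀ x : ℝ, 0 ≤ x → 0 ≤ f x := by
    intro x hx
    rcases eq_or_lt_of_le hx with h | h
    · simp [← h, hf0]
    · exact (hfpos x h).le
  -- continuity
  have hScont : ∀ k, Continuous (S k) := fun k => (hSk k).continuous
  have hIcont : ∀ k, Continuous (I k) := fun k => (hIk k).continuous
  have hS'cont : ∀ k, Continuous (deriv (S k)) := fun k => (hSk k).continuous_deriv le_rfl
  -- the constant C bounds S' from above
  have hNpos : 0 < 2*d₁*S₀ + Λ := by nlinarith [mul_pos hd₁ hS₀]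
  set C : ℝ := (2*d₁*S₀ + Λ)/c₁ with hCdef
  have hC : 0 < C := div_pos hNpos hc₁
  clear_value C
  have hS'le : ∀ k t, deriv (S k) t ≤ C := by
    intro k t
    obtain ⟨hck1, hck2⟩ := hck k
    have hckpos : 0 < c k := lt_of_lt_of_le hc₁ hck1
    have h := hSeq k t
    have hb1 := hSbd k (t+1); have hb2 := hSbd k (t-1); have hb3 := hSbd k t
    have hfI : 0 ≤ f (I k t) := hfnn _ (hIpos k t).le
    have hrhs : c k * deriv (S k) t ≤ 2*d₁*S₀ + Λ := by
      rw [h]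
      nlinarith [mul_nonneg (mul_nonneg hβ.le hb3.1.le) hfI, hd₁.le, hμ₁.le]
    calc deriv (S k) t = c k * deriv (S k) t / c k := by field_simp
      _ ≤ (2*d₁*S₀ + Λ) / c k := (div_le_div_iff_of_pos_right hckpos).mpr hrhs
      _ ≤ (2*d₁*S₀ + Λ) / c₁ := div_le_div_of_nonneg_left hNpos.le hc₁ hck1
      _ = C := hCdef.symm
  -- the constant M bounds I'/I from below
  set B : ℝ := 2*d₂ + μ₂ with hBdef
  have hB : 0 < B := by rw [hBdef]; linarith
  clear_value B
  set M : ℝ := B/c₁ with hMdef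
  have hM : 0 < M := div_pos hB hc₁
  clear_value M
  have hI' : ∀ k t, -(M * I k t) ≤ deriv (I k) t := by
    intro k t
    obtain ⟨hck1, hck2⟩ := hck k
    have hckpos : 0 < c k := lt_of_lt_of_le hc₁ hck1
    have h := hIeq k t
    have hfI : 0 ≤ f (I k t) := hfnn _ (hIpos k t).le
    have hSf : 0 ≤ β * S k t * f (I k t) :=
      mul_nonneg (mul_nonneg hβ.le (hSbd k t).1.le) hfI
    have h1 : -(B * I k t) ≤ c k * deriv (I k) t := by
      rw [h, hBdef]
      nlinarith [hIpos k (t+1), hIpos k (t-1), hIpos k t, hd₂.le]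
    have h2 : B * I k t ≤ c k * (M * I k t) := by
      have hMc : B = M * c₁ := by rw [hMdef]; field_simp
      rw [hMc]
      nlinarith [hM.le, (hIpos k t).le, mul_nonneg hM.le (hIpos k t).le]
    have h3 : 0 ≤ c k * (deriv (I k) t + M * I k t) := by nlinarith
    have h4 : 0 ≤ deriv (I k) t + M * I k t :=
      nonneg_of_mul_nonneg_right (by linarith [h3]) hckpos
    linarith
  -- exponential lower bound for I to the right
  have hIlow : ∀ k a b, a ≤ b → I k a * exp (-(M*(b-a))) ≤ I k b := by
    intro k a b hab
    have hgd : ∀ t, HasDerivAt (fun t => I k t * exp (M*t))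
        (deriv (I k) t * exp (M*t) + I k t * (exp (M*t) * M)) t := by
      intro t
      have h1 : HasDerivAt (I k) (deriv (I k) t) t :=
        ((hIk k).differentiable one_ne_zero t).hasDerivAt
      have h2 : HasDerivAt (fun t : ℝ => exp (M*t)) (exp (M*t) * M) t := by
        have := (Real.hasDerivAt_exp (M*t)).comp t ((hasDerivAt_id t).const_mul M)
        simpa [Function.comp_def] using this
      exact h1.mul h2
    have hgmono : Monotone (fun t => I k t * exp (M*t)) := by
      apply monotone_of_deriv_nonneg (fun t => (hgd t).differentiableAt)
      intro t
      rw [(hgd t).deriv]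
      have h3 := hI' k t
      nlinarith [exp_pos (M*t), (hIpos k t).le]
    have hgab : I k a * exp (M*a) ≤ I k b * exp (M*b) := hgmono hab
    have hmul := mul_le_mul_of_nonneg_right hgab (exp_pos (-(M*b))).le
    calc I k a * exp (-(M*(b-a))) = I k a * exp (M*a) * exp (-(M*b)) := by
          rw [mul_assoc, ← exp_add]; ring_nf
      _ ≤ I k b * exp (M*b) * exp (-(M*b)) := hmul
      _ = I k b := by rw [mul_assoc, ← exp_add]; simp
  -- the key pump constant κ : I stays comparably large half a unit to the left
  set κ : ℝ := d₂ * exp (-M) / B * (1 - exp (-(B/(2*c₂)))) with hκdef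
  have hκ : 0 < κ := by
    rw [hκdef]
    have h1 : exp (-(B/(2*c₂))) < 1 := by
      rw [exp_lt_one_iff]
      have : 0 < B/(2*c₂) := div_pos hB (by linarith)
      linarith
    have h2 : 0 < d₂ * exp (-M) / B := div_pos (mul_pos hd₂ (exp_pos _)) hB
    nlinarith
  clear_value κ
  have hIleft : ∀ k t, ξ k - 1/2 ≤ t → t ≤ ξ k → κ * I k (ξ k) ≤ I k t := by
    intro k t ht1 ht2
    obtain ⟨hck1, hck2⟩ := hck k
    have hckpos : 0 < c k := lt_of_lt_of_le hc₁ hck1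
    set α : ℝ := B / c k with hαdef
    have hα : 0 < α := div_pos hB hckpos
    clear_value α
    set P : ℝ := d₂ * exp (-M) / B * I k (ξ k) with hPdef
    have hP0 : 0 ≤ P := by
      rw [hPdef]
      exact mul_nonneg (div_nonneg (mul_nonneg hd₂.le (exp_pos _).le) hB.le)
        (hIpos k (ξ k)).le
    clear_value P
    -- step a : differential inequality on [ξ k - 1, ξ k]
    have hstepa : ∀ s, ξ k - 1 ≤ s → s ≤ ξ k → α * (P - I k s) ≤ deriv (I k) s := by
      intro s hs1 hs2
      have heq := hIeq k s
      have hpump : d₂ * (exp (-M) * I k (ξ k)) - B * I k s ≤ c k * deriv (I k) s := by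
        have h7 : exp (-M) ≤ exp (-(M*(s+1-ξ k))) := by
          apply exp_le_exp.mpr
          nlinarith [hM.le]
        have h8 : I k (ξ k) * exp (-(M*(s+1-ξ k))) ≤ I k (s+1) :=
          hIlow k (ξ k) (s+1) (by linarith)
        have h9 : I k (ξ k) * exp (-M) ≤ I k (s+1) :=
          le_trans (mul_le_mul_of_nonneg_left h7 (hIpos k (ξ k)).le) h8
        have h10 := hIpos k (s-1)
        have hSf : 0 ≤ β * S k s * f (I k s) :=
          mul_nonneg (mul_nonneg hβ.le (hSbd k s).1.le) (hfnn _ (hIpos k s).le)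
        rw [heq, hBdef]
        nlinarith [hd₂.le]
      have h11 : c k * (α * (P - I k s)) = d₂*(exp (-M) * I k (ξ k)) - B * I k s := by
        rw [hαdef, hPdef]
        field_simp
      have h12 : c k * (α * (P - I k s)) ≤ c k * deriv (I k) s := by
        rw [h11]; exact hpump
      exact le_of_mul_le_mul_left h12 hckpos
    -- step b : monotone auxiliary function
    have hgd : ∀ s, HasDerivAt (fun s => exp (α*s) * (I k s - P))
        (exp (α*s)*α*(I k s - P) + exp (α*s)*(deriv (I k) s)) s := by
      intro s
      have h1 : HasDerivAt (fun s : ℝ => exp (α*s)) (exp (α*s)*α) s := by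
        have := (Real.hasDerivAt_exp (α*s)).comp s ((hasDerivAt_id s).const_mul α)
        simpa [Function.comp_def] using this
      have h2 : HasDerivAt (fun s => I k s - P) (deriv (I k) s) s :=
        (((hIk k).differentiable one_ne_zero s).hasDerivAt).sub_const P
      exact h1.mul h2
    have hgdiff : Differentiable ℝ (fun s => exp (α*s) * (I k s - P)) :=
      fun s => (hgd s).differentiableAt
    have hgm : MonotoneOn (fun s => exp (α*s) * (I k s - P))
        (Set.Icc (ξ k - 1) (ξ k)) := by
      apply monotoneOn_of_deriv_nonneg (convex_Icc _ _)
        hgdiff.continuous.continuousOn hgdiff.differentiableOn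
      intro s hs
      rw [interior_Icc] at hs
      rw [(hgd s).deriv]
      have h13 := hstepa s hs.1.le hs.2.le
      nlinarith [exp_pos (α*s)]
    have hmem1 : ξ k - 1 ∈ Set.Icc (ξ k - 1) (ξ k) := ⟨le_refl _, by linarith⟩
    have hmem2 : t ∈ Set.Icc (ξ k - 1) (ξ k) := ⟨by linarith, ht2⟩
    have hg := hgm hmem1 hmem2 (by linarith : ξ k - 1 ≤ t)
    simp only at hg
    have h14 : -(P * exp (α*(ξ k - 1))) ≤ exp (α*t) * (I k t - P) := by
      nlinarith [exp_pos (α*(ξ k - 1)), (hIpos k (ξ k - 1)).le]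
    have hsplit : exp (α*(ξ k - 1)) = exp (α*t) * exp (α*(ξ k - 1 - t)) := by
      rw [← exp_add]; ring_nf
    have h15 : exp (α*t) * (-(P * exp (α*(ξ k - 1 - t)))) ≤ exp (α*t) * (I k t - P) := by
      have h15a : exp (α*t) * (-(P * exp (α*(ξ k - 1 - t)))) = -(P * exp (α*(ξ k - 1))) := by
        rw [hsplit]; ring
      linarith [h14]
    have h16 : -(P * exp (α*(ξ k - 1 - t))) ≤ I k t - P :=
      le_of_mul_le_mul_left h15 (exp_pos (α*t))
    have h17 : exp (α*(ξ k - 1 - t)) ≤ exp (-(B/(2*c₂))) := by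
      apply exp_le_exp.mpr
      have h18 : ξ k - 1 - t ≤ -(1/2) := by linarith
      have h19 : α * (ξ k - 1 - t) ≤ α * (-(1/2)) := by nlinarith [hα.le]
      have h20a : B/(2*c₂) ≤ B/(2*c k) := by
        apply div_le_div_of_nonneg_left hB.le (by linarith) (by linarith)
      have h20b : B/(2*c k) = α * (1/2) := by
        rw [hαdef]; ring
      linarith
    have h21 : P * exp (α*(ξ k - 1 - t)) ≤ P * exp (-(B/(2*c₂))) :=
      mul_le_mul_of_nonneg_left h17 hP0
    have h22 : P * (1 - exp (-(B/(2*c₂)))) = κ * I k (ξ k) := by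
      rw [hPdef, hκdef]; ring
    nlinarith [h16, h21, h22]
  -- main argument
  rw [NormedAddCommGroup.tendsto_nhds_zero]
  intro ε hε
  set ρ : ℝ := min (ε/(2*C)) (1/2) with hρdef
  have hρpos : 0 < ρ := lt_min (div_pos hε (by linarith)) (by norm_num)
  have hρle : ρ ≤ ε/(2*C) := min_le_left _ _
  have hρhalf : ρ ≤ 1/2 := min_le_right _ _
  clear_value ρ
  have hCρ : C * ρ ≤ ε/2 := by
    have h2 : C * (ε/(2*C)) = ε/2 := by
      field_simp
    calc C * ρ ≤ C * (ε/(2*C)) := mul_le_mul_of_nonneg_left hρle hC.le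
      _ = ε/2 := h2
  set K : ℝ := (2*d₁*S₀ + Λ)*ρ + c₂*S₀ with hKdef
  have hK : 0 < K := by
    rw [hKdef]
    linarith only [mul_pos hNpos hρpos, mul_pos hc₂ hS₀]
  clear_value K
  have hFt : Tendsto (fun k => f (κ * I k (ξ k))) atTop atTop :=
    hfinf.comp (hblow.const_mul_atTop hκ)
  set Q : ℝ := 2*K/(ε*β*ρ) with hQdef
  clear_value Q
  filter_upwards [hFt.eventually_gt_atTop Q] with k hQF
  obtain ⟨hck1, hck2⟩ := hck k
  have hckpos : 0 < c k := lt_of_lt_of_le hc₁ hck1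
  set F : ℝ := f (κ * I k (ξ k)) with hFdef
  have hFpos : 0 < F := by
    rw [hFdef]; exact hfpos _ (mul_pos hκ (hIpos k (ξ k)))
  clear_value F
  set b := ξ k with hb
  set a := ξ k - ρ with ha
  clear_value a b
  have hba : b - a = ρ := by rw [hb, ha]; ring
  have hab : a ≤ b := by rw [hb, ha]; linarith
  -- Step 1: integral identity and bound
  set G : ℝ → ℝ := fun t => d₁*(S k (t+1) + S k (t-1) - 2*S k t) + Λ - μ₁ * S k t
    with hGdef
  have hGcont : Continuous G := by
    rw [hGdef]
    have h1 := hScont k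
    fun_prop
  clear_value G
  have hcont1 : Continuous fun t => β * S k t * f (I k t) := by
    have h1 := hScont k; have h2 := hIcont k; have h3 := hfC1.continuous
    fun_prop
  have hint1 : ∫ t in a..b, c k * deriv (S k) t = c k * (S k b - S k a) := by
    rw [intervalIntegral.integral_const_mul, intervalIntegral.integral_deriv_eq_sub
      (fun x _ => ((hSk k).differentiable one_ne_zero).differentiableAt)
      ((hS'cont k).intervalIntegrable a b)]
  have heq : ∀ t, β * S k t * f (I k t) = G t - c k * deriv (S k) t := by
    intro t
    have h0 := hSeq k t
    simp only [hGdef]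
    linarith only [h0]
  have hint2 : (∫ t in a..b, β * S k t * f (I k t))
      = (∫ t in a..b, G t) - c k * (S k b - S k a) := by
    rw [intervalIntegral.integral_congr (g := fun t => G t - c k * deriv (S k) t)
      (fun t _ => heq t),
      intervalIntegral.integral_sub (g := fun t => c k * deriv (S k) t) (hGcont.intervalIntegrable a b)
      ((continuous_const.mul (hS'cont k)).intervalIntegrable a b), hint1]
  have hGbd : ∫ t in a..b, G t ≤ (2*d₁*S₀+Λ)*ρ := by
    have h1 : ∫ t in a..b, G t ≤ ∫ _t in a..b, (2*d₁*S₀+Λ) := by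
      apply intervalIntegral.integral_mono_on hab (hGcont.intervalIntegrable a b)
        intervalIntegrable_const
      intro t _ht
      have hb1 := hSbd k (t+1); have hb2 := hSbd k (t-1); have hb3 := hSbd k t
      simp only [hGdef]
      linarith only [mul_le_mul_of_nonneg_left hb1.2.le hd₁.le,
        mul_le_mul_of_nonneg_left hb2.2.le hd₁.le,
        (mul_pos hd₁ hb3.1).le, (mul_pos hμ₁ hb3.1).le]
    rw [intervalIntegral.integral_const, hba, smul_eq_mul] at h1
    linarith only [h1]
  have hSfK : (∫ t in a..b, β * S k t * f (I k t)) ≤ K := by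
    rw [hint2]
    have hSa := hSbd k a
    have hSb := hSbd k b
    have h2 : c k * (S k a - S k b) ≤ c₂ * S₀ := by
      linarith only [mul_le_mul hck2 hSa.2.le hSa.1.le hc₂.le,
        (mul_pos hckpos hSb.1).le]
    rw [hKdef]; linarith only [hGbd, h2]
  -- Step 2: F bounds f (I k t) below on [a,b]
  have hFle : ∀ t ∈ Set.Icc a b, F ≤ f (I k t) := by
    intro t ht
    have ht1 : ξ k - 1/2 ≤ t := by
      have h0 := ht.1; rw [ha] at h0; linarith only [h0, hρhalf]
    have ht2 : t ≤ ξ k := by rw [← hb]; exact ht.2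
    have h1 : κ * I k (ξ k) ≤ I k t := hIleft k t ht1 ht2
    rw [hFdef, hb]
    exact hfmono (Set.mem_Ici.mpr (mul_nonneg hκ.le (hIpos k (ξ k)).le))
      (Set.mem_Ici.mpr (hIpos k t).le) h1
  -- Step 3: S is bounded below near b
  have hSlow : ∀ t ∈ Set.Icc a b, S k b - C*ρ ≤ S k t := by
    intro t ht
    have hhd : ∀ s : ℝ, HasDerivAt (fun s => C*s - S k s) (C - deriv (S k) s) s := by
      intro s
      have h0 := ((hasDerivAt_id s).const_mul C).sub
        (((hSk k).differentiable one_ne_zero s).hasDerivAt)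
      simpa [Pi.sub_def] using h0
    have hmono : Monotone (fun s => C*s - S k s) :=
      monotone_of_deriv_nonneg (fun s => (hhd s).differentiableAt)
        (fun s => by rw [(hhd s).deriv]; linarith [hS'le k s])
    have h5 := hmono ht.2
    simp only at h5
    have h4 : b - t ≤ ρ := by
      have h0 := ht.1; rw [← hba]; linarith only [h0]
    have h4b : C*(b-t) ≤ C*ρ := mul_le_mul_of_nonneg_left h4 hC.le
    have h4c : C*(b-t) = C*b - C*t := by ring
    linarith only [h5, h4b, h4c]
  -- combine the integral bounds
  have hintS : β * F * ∫ t in a..b, S k t ≤ K := by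
    have hpt : ∀ t ∈ Set.Icc a b, β * F * S k t ≤ β * S k t * f (I k t) := by
      intro t ht
      have hFf := hFle t ht
      have hSt := (hSbd k t).1
      have h2 := mul_le_mul_of_nonneg_left hFf (mul_nonneg hβ.le hSt.le)
      linarith only [h2]
    have h1 := intervalIntegral.integral_mono_on (μ := MeasureTheory.volume)
      (f := fun t => β * F * S k t) (g := fun t => β * S k t * f (I k t)) hab
      ((continuous_const.mul (hScont k)).intervalIntegrable a b)
      (hcont1.intervalIntegrable a b) hpt
    rw [intervalIntegral.integral_const_mul] at h1
    linarith only [h1, hSfK]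
  have hintS2 : (S k b - C*ρ)*ρ ≤ ∫ t in a..b, S k t := by
    have h1 := intervalIntegral.integral_mono_on (μ := MeasureTheory.volume)
      (f := fun _ => S k b - C*ρ) (g := S k) hab intervalIntegrable_const
      ((hScont k).intervalIntegrable a b) hSlow
    rw [intervalIntegral.integral_const, hba, smul_eq_mul] at h1
    linarith only [h1]
  have hstep1 : β * F * ((S k b - C*ρ)*ρ) ≤ K := by
    have h0 := mul_le_mul_of_nonneg_left hintS2 (mul_pos hβ hFpos).le
    linarith only [h0, hintS]
  -- final arithmetic
  have hSb0 : 0 < S k b := (hSbd k b).1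
  rw [Real.norm_eq_abs, abs_of_pos hSb0]
  have hX : 0 < β * F * ρ := mul_pos (mul_pos hβ hFpos) hρpos
  have h5 : S k b - C*ρ ≤ K / (β*F*ρ) := by
    rw [le_div_iff₀ hX]; linarith only [hstep1]
  have h6 : K / (β*F*ρ) < ε/2 := by
    rw [div_lt_iff₀ hX]
    have hQ : Q * (ε*β*ρ) = 2*K := by
      rw [hQdef]
      field_simp
    have hmul : Q * (ε*β*ρ) < F * (ε*β*ρ) :=
      mul_lt_mul_of_pos_right hQF (mul_pos (mul_pos hε hβ) hρpos)
    linarith only [hQ, hmul]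
  linarith only [h5, h6, hCρ]
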